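/- In ℝ^{p+q} with the product Weyl group W = W(B_p) × W(B_q) acting by signed permutations on the coordinates ε_1,...,ε_p and ε_{p+1},...,ε_{p+q} separately, with dominance λ_1 ≥ ... ≥ λ_p ≥ 0 and λ_{p+1} ≥ ... ≥ λ_{p+q} ≥ 0, for 1 ≤ a ≤ p and p+1 ≤ b ≤ p+q the index of ε_a - ε_b equals (a-1) + (p+q-b) + q and the index of -ε_a + ε_b equals (b-(p+1)) + (p-a) + p. -/
import Mathlib


noncomputable section

/-- The `i`-th standard basis vector of `ℝ^r`. -/
def eps (r : ℕ) (i : Fin r) : Fin r → ℝ := fun k => if k = i then 1 else 0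

/-- Linear automorphisms of `ℝ^r`. -/
abbrev Aut (r : ℕ) := (Fin r → ℝ) ≃ₗ[ℝ] (Fin r → ℝ)

/-- The automorphism permuting coordinates by `e` (i.e. `v ↦ v ∘ e`). -/
def permAut {r : ℕ} (e : Equiv.Perm (Fin r)) : Aut r :=
  LinearEquiv.funCongrLeft ℝ ℝ e

/-- The automorphism negating the `i`-th coordinate. -/
def flipAut {r : ℕ} (i : Fin r) : Aut r :=
  LinearEquiv.piCongrRight (fun k => if k = i then LinearEquiv.neg ℝ else LinearEquiv.refl ℝ ℝ)

/-- `ind`: minimal length of a word in the simple generators whose product moves `lam` into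
the dominant cone (this is the minimal Coxeter length of `w ∈ W` with `w • lam` dominant). -/
def ind (r : ℕ) (isGen : Aut r → Prop) (dom : (Fin r → ℝ) → Prop) (lam : Fin r → ℝ) : ℕ :=
  sInf { n | ∃ l : List (Aut r), (∀ g ∈ l, isGen g) ∧ l.length = n ∧ dom (l.prod lam) }

/-- Simple generators of the symmetric group `S_r` (type `A_{r-1}`): adjacent transpositions. -/
def isGenA (r : ℕ) (g : Aut r) : Prop :=
  ∃ i j : Fin r, (i : ℕ) + 1 = (j : ℕ) ∧ g = permAut (Equiv.swap i j)

/-- Type `A` dominance: weakly decreasing coordinates. -/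
def domA (r : ℕ) (v : Fin r → ℝ) : Prop := ∀ i j : Fin r, i ≤ j → v j ≤ v i

/-- Simple generators of the hyperoctahedral group (Weyl group of type `B_r`/`C_r`):
adjacent transpositions and the sign flip of the last coordinate. -/
def isGenBC (r : ℕ) (g : Aut r) : Prop :=
  (∃ i j : Fin r, (i : ℕ) + 1 = (j : ℕ) ∧ g = permAut (Equiv.swap i j)) ∨
  (∃ h : r - 1 < r, g = flipAut ⟨r - 1, h⟩)

/-- Type `B/C` dominance: `λ₁ ≥ ⋯ ≥ λ_r ≥ 0`. -/
def domBC (r : ℕ) (v : Fin r → ℝ) : Prop :=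
  (∀ i j : Fin r, i ≤ j → v j ≤ v i) ∧ ∀ i, 0 ≤ v i

/-- Simple generators of the Weyl group of type `D_r`: adjacent transpositions and the
reflection in `ε_{r-1} + ε_r` (swap the last two coordinates and negate both). -/
def isGenD (r : ℕ) (g : Aut r) : Prop :=
  (∃ i j : Fin r, (i : ℕ) + 1 = (j : ℕ) ∧ g = permAut (Equiv.swap i j)) ∨
  (∃ (h1 : r - 2 < r) (h2 : r - 1 < r),
    g = flipAut ⟨r - 2, h1⟩ * flipAut ⟨r - 1, h2⟩ *
      permAut (Equiv.swap ⟨r - 2, h1⟩ ⟨r - 1, h2⟩))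

/-- Type `D` dominance: `λ₁ ≥ ⋯ ≥ λ_{r-1} ≥ |λ_r|`. -/
def domD (r : ℕ) (v : Fin r → ℝ) : Prop :=
  (∀ i j : Fin r, i ≤ j → (j : ℕ) + 1 < r → v j ≤ v i) ∧
  (∀ i : Fin r, (i : ℕ) + 1 < r → ∀ h : r - 1 < r, |v ⟨r - 1, h⟩| ≤ v i)

/-- Simple generators of `W(B_p) × W(B_q)` acting on `ℝ^{p+q}`: adjacent transpositions
within each block, and the sign flips of the last coordinate of each block. -/
def isGenBB (p q : ℕ) (g : Aut (p + q)) : Prop :=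
  (∃ i j : Fin (p + q), (i : ℕ) + 1 = (j : ℕ) ∧ ((j : ℕ) < p ∨ p ≤ (i : ℕ)) ∧
    g = permAut (Equiv.swap i j)) ∨
  (∃ h : p - 1 < p + q, 1 ≤ p ∧ g = flipAut ⟨p - 1, h⟩) ∨
  (∃ h : p + q - 1 < p + q, 1 ≤ q ∧ g = flipAut ⟨p + q - 1, h⟩)

/-- Dominance for `W(B_p) × W(B_q)`: each block weakly decreasing and nonnegative. -/
def domBB (p q : ℕ) (v : Fin (p + q) → ℝ) : Prop :=
  (∀ i j : Fin (p + q), i ≤ j → (j : ℕ) < p → v j ≤ v i) ∧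
  (∀ i j : Fin (p + q), i ≤ j → p ≤ (i : ℕ) → v j ≤ v i) ∧
  (∀ i, 0 ≤ v i)

/-- Simple generators of `W(D_p) × W(B_q)` acting on `ℝ^{p+q}`. -/
def isGenDB (p q : ℕ) (g : Aut (p + q)) : Prop :=
  (∃ i j : Fin (p + q), (i : ℕ) + 1 = (j : ℕ) ∧ ((j : ℕ) < p ∨ p ≤ (i : ℕ)) ∧
    g = permAut (Equiv.swap i j)) ∨
  (∃ (h1 : p - 2 < p + q) (h2 : p - 1 < p + q), 2 ≤ p ∧
    g = flipAut ⟨p - 2, h1⟩ * flipAut ⟨p - 1, h2⟩ *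
      permAut (Equiv.swap ⟨p - 2, h1⟩ ⟨p - 1, h2⟩)) ∨
  (∃ h : p + q - 1 < p + q, 1 ≤ q ∧ g = flipAut ⟨p + q - 1, h⟩)

/-- Dominance for `W(D_p) × W(B_q)`: `v₁ ≥ ⋯ ≥ v_{p-1} ≥ |v_p|` on the first block and
`v_{p+1} ≥ ⋯ ≥ v_{p+q} ≥ 0` on the second. -/
def domDB (p q : ℕ) (v : Fin (p + q) → ℝ) : Prop :=
  (∀ i j : Fin (p + q), i ≤ j → (j : ℕ) + 1 < p → v j ≤ v i) ∧
  (∀ i : Fin (p + q), (i : ℕ) + 1 < p → ∀ h : p - 1 < p + q, |v ⟨p - 1, h⟩| ≤ v i) ∧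
  (∀ i j : Fin (p + q), i ≤ j → p ≤ (i : ℕ) → v j ≤ v i) ∧
  (∀ i : Fin (p + q), p ≤ (i : ℕ) → 0 ≤ v i)

namespace IndBB

def sgn (s : Bool) : ℝ := if s then 1 else -1

def ovec (r : ℕ) (i j : Fin r) (s t : Bool) : Fin r → ℝ :=
  fun k => if k = i then sgn s else if k = j then sgn t else 0

def costB (off m pos : ℕ) (s : Bool) : ℕ :=
  if s then pos - off else 2 * m - 1 - (pos - off)

def cost (p q i j : ℕ) (s t : Bool) : ℕ :=
  costB 0 p i s + costB p q j t

lemma neg_sgn (s : Bool) : -sgn s = sgn (!s) := by cases s <;> simp [sgn]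

lemma permAut_apply {r : ℕ} (e : Equiv.Perm (Fin r)) (v : Fin r → ℝ) (k : Fin r) :
    permAut e v k = v (e k) := by
  simp [permAut, LinearEquiv.funCongrLeft]

lemma flipAut_apply {r : ℕ} (x : Fin r) (v : Fin r → ℝ) (k : Fin r) :
    flipAut x v k = if k = x then -v k else v k := by
  simp only [flipAut, LinearEquiv.piCongrRight_apply]
  split <;> simp

lemma permAut_ovec {r : ℕ} (e : Equiv.Perm (Fin r)) (i j : Fin r) (s t : Bool) :
    permAut e (ovec r i j s t) = ovec r (e.symm i) (e.symm j) s t := by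
  funext k
  simp [permAut_apply, ovec, Equiv.apply_eq_iff_eq_symm_apply]

lemma flipAut_ovec {r : ℕ} (x i j : Fin r) (s t : Bool) :
    flipAut x (ovec r i j s t) =
      ovec r i j (if i = x then !s else s) (if j = x then !t else t) := by
  funext k
  simp only [flipAut_apply, ovec]
  by_cases hki : k = i
  · subst hki
    by_cases hx : k = x
    · subst hx
      simp [neg_sgn]
    · simp [hx, Ne.symm hx]
  · by_cases hkj : k = j
    · subst hkj
      by_cases hx : k = x
      · subst hx
        simp [hki, Ne.symm hki, neg_sgn]
      · simp [hki, hx, Ne.symm hx]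
    · by_cases hx : k = x
      · subst hx
        simp [hki, hkj, Ne.symm hki, Ne.symm hkj]
      · simp [hki, hkj, hx]

lemma cost_zero_of_dom (p q : ℕ) (i j : Fin (p+q)) (s t : Bool)
    (hi : i.1 < p) (hj : p ≤ j.1) (h : domBB p q (ovec (p+q) i j s t)) :
    cost p q i.1 j.1 s t = 0 := by
  obtain ⟨h1, h2, h3⟩ := h
  have hij : i ≠ j := Fin.ne_of_val_ne (by first | omega | (simp only [Fin.val_mk]; omega))
  have hs : s = true := by
    have := h3 i
    simp [ovec] at this
    cases s
    · simp [sgn] at this; linarith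
    · rfl
  have ht : t = true := by
    have := h3 j
    simp [ovec, hij.symm] at this
    cases t
    · simp [sgn] at this; linarith
    · rfl
  subst hs; subst ht
  have hi0 : i.1 = 0 := by
    by_contra hne
    have hz : (0 : ℕ) < p + q := by omega
    have hle : (⟨0, hz⟩ : Fin (p+q)) ≤ i := by simp [Fin.le_def]
    have := h1 ⟨0, hz⟩ i hle hi
    have hzi : (⟨0, hz⟩ : Fin (p+q)) ≠ i := Fin.ne_of_val_ne (by first | omega | (simp only [Fin.val_mk]; omega))
    have hzj : (⟨0, hz⟩ : Fin (p+q)) ≠ j := Fin.ne_of_val_ne (by first | omega | (simp only [Fin.val_mk]; omega))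
    simp [ovec, hzi, hzj, sgn] at this
    linarith
  have hjp : j.1 = p := by
    by_contra hne
    have hz : p < p + q := by omega
    have hle : (⟨p, hz⟩ : Fin (p+q)) ≤ j := by simp [Fin.le_def]; omega
    have := h2 ⟨p, hz⟩ j hle (by simp)
    have hzi : (⟨p, hz⟩ : Fin (p+q)) ≠ i := Fin.ne_of_val_ne (by first | omega | (simp only [Fin.val_mk]; omega))
    have hzj : (⟨p, hz⟩ : Fin (p+q)) ≠ j := Fin.ne_of_val_ne (by first | omega | (simp only [Fin.val_mk]; omega))
    simp [ovec, hzi, hzj, sgn] at this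
    linarith
  simp [cost, costB, hi0, hjp]

lemma dom_ovec (p q : ℕ) (i j : Fin (p+q)) (hi : i.1 = 0) (hj : j.1 = p) :
    domBB p q (ovec (p+q) i j true true) := by
  have nonneg : ∀ k, (0:ℝ) ≤ ovec (p+q) i j true true k := by
    intro k
    simp only [ovec, sgn]
    split
    · norm_num
    · split <;> norm_num
  refine ⟨?_, ?_, nonneg⟩
  · intro a b hab hbp
    by_cases hb : b = i
    · have ha : a = i := by
        apply Fin.eq_of_val_eq
        have := Fin.le_def.mp hab
        omega
      rw [hb, ha]
    · have hbj : b ≠ j := Fin.ne_of_val_ne (by first | omega | (simp only [Fin.val_mk]; omega))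
      simp only [ovec, hb, hbj, if_false]
      exact nonneg a
  · intro a b hab hpa
    by_cases hb : b = j
    · have ha : a = j := by
        apply Fin.eq_of_val_eq
        have h1 := Fin.le_def.mp hab
        have h2 : b.1 = p := by rw [hb]; exact hj
        omega
      rw [hb, ha]
    · have hbi : b ≠ i := by
        refine Fin.ne_of_val_ne ?_
        have := Fin.le_def.mp hab
        omega
      simp only [ovec, hb, hbi, if_false]
      exact nonneg a


lemma costB_move (off m : ℕ) (s : Bool) (pos pos' : ℕ) (h1 : off ≤ pos) (h2 : pos < off + m)
    (h1' : off ≤ pos') (h2' : pos' < off + m) (hd : pos ≤ pos' + 1) (hd' : pos' ≤ pos + 1) :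
    costB off m pos s ≤ costB off m pos' s + 1 := by
  cases s <;> simp [costB] <;> omega

lemma swap_val {r : ℕ} (x y k : Fin r) :
    ((Equiv.swap x y k).1 = k.1 ∨ (k.1 = x.1 ∧ (Equiv.swap x y k).1 = y.1) ∨
      (k.1 = y.1 ∧ (Equiv.swap x y k).1 = x.1)) := by
  by_cases h1 : k = x
  · subst h1; right; left; exact ⟨rfl, congrArg Fin.val (Equiv.swap_apply_left _ _)⟩
  · by_cases h2 : k = y
    · subst h2; right; right; exact ⟨rfl, congrArg Fin.val (Equiv.swap_apply_right _ _)⟩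
    · left; exact congrArg Fin.val (Equiv.swap_apply_of_ne_of_ne h1 h2)

lemma gen_step (p q : ℕ) (g : Aut (p+q)) (hg : isGenBB p q g) (i j : Fin (p+q)) (s t : Bool)
    (hi : i.1 < p) (hj : p ≤ j.1) :
    ∃ (i' j' : Fin (p+q)) (s' t' : Bool), i'.1 < p ∧ p ≤ j'.1 ∧
      g (ovec (p+q) i j s t) = ovec (p+q) i' j' s' t' ∧
      cost p q i.1 j.1 s t ≤ cost p q i'.1 j'.1 s' t' + 1 := by
  have hjlt := j.isLt
  rcases hg with ⟨x, y, hxy, hblock, rfl⟩ | ⟨h, hp1, rfl⟩ | ⟨h, hq1, rfl⟩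
  · have hix := swap_val x y i
    have hjx := swap_val x y j
    refine ⟨Equiv.swap x y i, Equiv.swap x y j, s, t, by omega, by omega, ?_, ?_⟩
    · rw [permAut_ovec, Equiv.symm_swap]
    · rcases hblock with hb | hb
      · have hji : (Equiv.swap x y j).1 = j.1 := by omega
        have hmove : costB 0 p i.1 s ≤ costB 0 p (Equiv.swap x y i).1 s + 1 :=
          costB_move 0 p s i.1 (Equiv.swap x y i).1 (by omega) (by omega) (by omega) (by omega)
            (by omega) (by omega)
        simp only [cost, hji]
        omega
      · have hii : (Equiv.swap x y i).1 = i.1 := by omega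
        have hmove : costB p q j.1 t ≤ costB p q (Equiv.swap x y j).1 t + 1 :=
          costB_move p q t j.1 (Equiv.swap x y j).1 (by omega) (by omega) (by omega) (by omega)
            (by omega) (by omega)
        simp only [cost, hii]
        omega
  · set x : Fin (p+q) := ⟨p - 1, h⟩ with hxdef
    have hjx : j ≠ x := Fin.ne_of_val_ne (by simp [hxdef]; omega)
    refine ⟨i, j, if i = x then !s else s, t, hi, hj, ?_, ?_⟩
    · rw [flipAut_ovec]
      simp [hjx]
    · by_cases hix : i = x
      · have hival : i.1 = p - 1 := by rw [hix]
        have : costB 0 p i.1 s ≤ costB 0 p i.1 (if i = x then !s else s) + 1 := by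
          cases s <;> simp [hix, costB, hival] <;> omega
        simp only [cost]
        omega
      · simp [cost, hix]
  · set x : Fin (p+q) := ⟨p + q - 1, h⟩ with hxdef
    have hix : i ≠ x := Fin.ne_of_val_ne (by simp [hxdef]; omega)
    refine ⟨i, j, s, if j = x then !t else t, hi, hj, ?_, ?_⟩
    · rw [flipAut_ovec]
      simp [hix]
    · by_cases hjx : j = x
      · have hjval : j.1 = p + q - 1 := by rw [hjx]
        have : costB p q j.1 t ≤ costB p q j.1 (if j = x then !t else t) + 1 := by
          cases t <;> simp [hjx, costB, hjval] <;> omega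
        simp only [cost]
        omega
      · simp [cost, hjx]


lemma lower (p q : ℕ) (l : List (Aut (p+q))) :
    (∀ g ∈ l, isGenBB p q g) → ∀ (i j : Fin (p+q)) (s t : Bool), i.1 < p → p ≤ j.1 →
    domBB p q (l.prod (ovec (p+q) i j s t)) → cost p q i.1 j.1 s t ≤ l.length := by
  induction l using List.reverseRecOn with
  | nil =>
    intro _ i j s t hi hj hdom
    have : domBB p q (ovec (p+q) i j s t) := hdom
    simp [cost_zero_of_dom p q i j s t hi hj this]
  | append_singleton l g ih =>
    intro hgen i j s t hi hj hdom
    obtain ⟨i', j', s', t', hi', hj', heq, hle⟩ :=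
      gen_step p q g (hgen g (by simp)) i j s t hi hj
    have hdom' : domBB p q (l.prod (ovec (p+q) i' j' s' t')) := by
      rw [← heq]
      rw [List.prod_append] at hdom
      exact hdom
    have := ih (fun g' hg' => hgen g' (by simp [hg'])) i' j' s' t' hi' hj' hdom'
    simp only [List.length_append, List.length_singleton]
    omega

lemma extend (p q : ℕ) (g : Aut (p+q)) (hg : isGenBB p q g) (v w : Fin (p+q) → ℝ)
    (hw : g v = w) (n : ℕ)
    (h : ∃ l : List (Aut (p+q)), (∀ g' ∈ l, isGenBB p q g') ∧ l.length = n ∧ domBB p q (l.prod w)) :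
    ∃ l : List (Aut (p+q)), (∀ g' ∈ l, isGenBB p q g') ∧ l.length = n + 1 ∧
      domBB p q (l.prod v) := by
  obtain ⟨l, h1, h2, h3⟩ := h
  refine ⟨l ++ [g], ?_, by simp [h2], ?_⟩
  · intro g' hg'
    rcases List.mem_append.mp hg' with hmem | hmem
    · exact h1 _ hmem
    · rwa [List.mem_singleton.mp hmem]
  · rw [List.prod_append]
    show domBB p q (l.prod (g v))
    rw [hw]
    exact h3


lemma upper (p q : ℕ) : ∀ (n : ℕ) (i j : Fin (p+q)) (s t : Bool), i.1 < p → p ≤ j.1 →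
    cost p q i.1 j.1 s t = n →
    ∃ l : List (Aut (p+q)), (∀ g ∈ l, isGenBB p q g) ∧ l.length = n ∧
      domBB p q (l.prod (ovec (p+q) i j s t)) := by
  intro n
  induction n with
  | zero =>
    intro i j s t hi hj hc
    have hjlt := j.isLt
    cases s <;> cases t <;> simp [cost, costB] at hc <;> try (exfalso; omega)
    exact ⟨[], by simp, by simp, dom_ovec p q i j (by omega) (by omega)⟩
  | succ n ih =>
    intro i j s t hi hj hc
    have hjlt := j.isLt
    cases s with
    | false =>
      by_cases hie : i.1 = p - 1
      · have hlt : p - 1 < p + q := by omega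
        have hgen : isGenBB p q (flipAut (⟨p-1, hlt⟩ : Fin (p+q))) :=
          Or.inr (Or.inl ⟨hlt, by omega, rfl⟩)
        have hix : i = (⟨p-1, hlt⟩ : Fin (p+q)) := Fin.eq_of_val_eq hie
        have hjx : j ≠ (⟨p-1, hlt⟩ : Fin (p+q)) := Fin.ne_of_val_ne (by simp; omega)
        refine extend p q _ hgen _ (ovec (p+q) i j true t) ?_ n (ih i j true t hi hj ?_)
        · rw [flipAut_ovec]
          rw [if_pos hix, if_neg hjx]
          rfl
        · cases t <;> simp [cost, costB] at hc ⊢ <;> omega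
      · have hy : i.1 + 1 < p + q := by omega
        have hgen : isGenBB p q (permAut (Equiv.swap i (⟨i.1+1, hy⟩ : Fin (p+q)))) :=
          Or.inl ⟨i, ⟨i.1+1, hy⟩, by simp, Or.inl (by simp; omega), rfl⟩
        have hji : j ≠ i := Fin.ne_of_val_ne (by omega)
        have hjy : j ≠ (⟨i.1+1, hy⟩ : Fin (p+q)) := Fin.ne_of_val_ne (by simp; omega)
        refine extend p q _ hgen _ (ovec (p+q) ⟨i.1+1, hy⟩ j false t) ?_ n
          (ih ⟨i.1+1, hy⟩ j false t (by simp; omega) hj ?_)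
        · rw [permAut_ovec, Equiv.symm_swap,
            Equiv.swap_apply_left, Equiv.swap_apply_of_ne_of_ne hji hjy]
        · cases t <;> simp [cost, costB] at hc ⊢ <;> omega
    | true =>
      by_cases hi0 : i.1 = 0
      · cases t with
        | true =>
          have hjp : p < j.1 := by
            simp [cost, costB, hi0] at hc
            omega
          have hx : j.1 - 1 < p + q := by omega
          have hgen : isGenBB p q (permAut (Equiv.swap (⟨j.1-1, hx⟩ : Fin (p+q)) j)) :=
            Or.inl ⟨⟨j.1-1, hx⟩, j, by simp; omega, Or.inr (by simp; omega), rfl⟩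
          have hij : i ≠ (⟨j.1-1, hx⟩ : Fin (p+q)) := Fin.ne_of_val_ne (by simp; omega)
          have hij' : i ≠ j := Fin.ne_of_val_ne (by omega)
          refine extend p q _ hgen _ (ovec (p+q) i ⟨j.1-1, hx⟩ true true) ?_ n
            (ih i ⟨j.1-1, hx⟩ true true hi (by simp; omega) ?_)
          · rw [permAut_ovec, Equiv.symm_swap,
              Equiv.swap_apply_of_ne_of_ne hij hij', Equiv.swap_apply_right]
          · simp [cost, costB] at hc ⊢
            omega
        | false =>
          by_cases hje : j.1 = p + q - 1
          · have hlt : p + q - 1 < p + q := by omega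
            have hgen : isGenBB p q (flipAut (⟨p+q-1, hlt⟩ : Fin (p+q))) :=
              Or.inr (Or.inr ⟨hlt, by omega, rfl⟩)
            have hjx : j = (⟨p+q-1, hlt⟩ : Fin (p+q)) := Fin.eq_of_val_eq hje
            have hix : i ≠ (⟨p+q-1, hlt⟩ : Fin (p+q)) := Fin.ne_of_val_ne (by simp; omega)
            refine extend p q _ hgen _ (ovec (p+q) i j true true) ?_ n (ih i j true true hi hj ?_)
            · rw [flipAut_ovec]
              rw [if_pos hjx, if_neg hix]
              rfl
            · simp [cost, costB] at hc ⊢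
              omega
          · have hy : j.1 + 1 < p + q := by omega
            have hgen : isGenBB p q (permAut (Equiv.swap j (⟨j.1+1, hy⟩ : Fin (p+q)))) :=
              Or.inl ⟨j, ⟨j.1+1, hy⟩, by simp, Or.inr hj, rfl⟩
            have hij : i ≠ j := Fin.ne_of_val_ne (by omega)
            have hiy : i ≠ (⟨j.1+1, hy⟩ : Fin (p+q)) := Fin.ne_of_val_ne (by simp; omega)
            refine extend p q _ hgen _ (ovec (p+q) i ⟨j.1+1, hy⟩ true false) ?_ n
              (ih i ⟨j.1+1, hy⟩ true false hi (by simp; omega) ?_)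
            · rw [permAut_ovec, Equiv.symm_swap,
                Equiv.swap_apply_of_ne_of_ne hij hiy, Equiv.swap_apply_left]
            · simp [cost, costB] at hc ⊢
              omega
      · have hx : i.1 - 1 < p + q := by omega
        have hgen : isGenBB p q (permAut (Equiv.swap (⟨i.1-1, hx⟩ : Fin (p+q)) i)) :=
          Or.inl ⟨⟨i.1-1, hx⟩, i, by simp; omega, Or.inl hi, rfl⟩
        have hji : j ≠ i := Fin.ne_of_val_ne (by omega)
        have hjx : j ≠ (⟨i.1-1, hx⟩ : Fin (p+q)) := Fin.ne_of_val_ne (by simp; omega)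
        refine extend p q _ hgen _ (ovec (p+q) ⟨i.1-1, hx⟩ j true t) ?_ n
          (ih ⟨i.1-1, hx⟩ j true t (by simp; omega) hj ?_)
        · rw [permAut_ovec, Equiv.symm_swap,
            Equiv.swap_apply_right, Equiv.swap_apply_of_ne_of_ne hjx hji]
        · cases t <;> simp [cost, costB] at hc ⊢ <;> omega

lemma ind_eq (p q : ℕ) (i j : Fin (p+q)) (s t : Bool) (hi : i.1 < p) (hj : p ≤ j.1) :
    ind (p+q) (isGenBB p q) (domBB p q) (ovec (p+q) i j s t) = cost p q i.1 j.1 s t := by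
  obtain ⟨l, h1, h2, h3⟩ := upper p q (cost p q i.1 j.1 s t) i j s t hi hj rfl
  have hmem : cost p q i.1 j.1 s t ∈
      { n | ∃ l : List (Aut (p+q)), (∀ g ∈ l, isGenBB p q g) ∧ l.length = n ∧
        domBB p q (l.prod (ovec (p+q) i j s t)) } := ⟨l, h1, h2, h3⟩
  refine le_antisymm (Nat.sInf_le hmem) ?_
  obtain ⟨l', h1', h2', h3'⟩ := Nat.sInf_mem (Set.nonempty_of_mem hmem)
  rw [ind] at *
  calc cost p q i.1 j.1 s t ≤ l'.length := lower p q l' h1' i j s t hi hj h3'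
    _ = _ := h2'



lemma eps_sub (r : ℕ) (i j : Fin r) (h : i ≠ j) :
    eps r i - eps r j = ovec r i j true false := by
  funext k
  simp only [Pi.sub_apply, eps, ovec, sgn]
  by_cases h1 : k = i
  · subst h1; simp [h]
  · by_cases h2 : k = j <;> simp [h1, h2, Ne.symm h]

lemma eps_sub' (r : ℕ) (i j : Fin r) (h : i ≠ j) :
    -eps r i + eps r j = ovec r i j false true := by
  funext k
  simp only [Pi.add_apply, Pi.neg_apply, eps, ovec, sgn]
  by_cases h1 : k = i
  · subst h1; simp [h]
  · by_cases h2 : k = j <;> simp [h1, h2, Ne.symm h]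

end IndBB

/-- In `ℝ^{p+q}` with the product Weyl group `W(B_p) × W(B_q)` acting by signed
permutations of the two blocks separately: for `1 ≤ a ≤ p < b ≤ p+q`,
`ind(ε_a - ε_b) = (a-1) + (p+q-b) + q` and `ind(-ε_a + ε_b) = (b-(p+1)) + (p-a) + p`. -/
theorem ind_typeBpBq (p q a b : ℕ) (hp : 1 ≤ p) (hq : 1 ≤ q)
    (ha : 1 ≤ a) (hap : a ≤ p) (hpb : p < b) (hbr : b ≤ p + q) :
    ind (p + q) (isGenBB p q) (domBB p q)
      (eps (p + q) ⟨a - 1, by omega⟩ - eps (p + q) ⟨b - 1, by omega⟩)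
      = (a - 1) + (p + q - b) + q ∧
    ind (p + q) (isGenBB p q) (domBB p q)
      (-eps (p + q) ⟨a - 1, by omega⟩ + eps (p + q) ⟨b - 1, by omega⟩)
      = (b - (p + 1)) + (p - a) + p := by
  have hne : (⟨a - 1, by omega⟩ : Fin (p + q)) ≠ ⟨b - 1, by omega⟩ :=
    Fin.ne_of_val_ne (by simp; omega)
  have hi : ((⟨a - 1, by omega⟩ : Fin (p + q)) : ℕ) < p := by simp; omega
  have hj : p ≤ ((⟨b - 1, by omega⟩ : Fin (p + q)) : ℕ) := by simp; omega
  constructor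
  · rw [IndBB.eps_sub _ _ _ hne, IndBB.ind_eq p q _ _ _ _ hi hj]
    simp [IndBB.cost, IndBB.costB]
    omega
  · rw [IndBB.eps_sub' _ _ _ hne, IndBB.ind_eq p q _ _ _ _ hi hj]
    simp [IndBB.cost, IndBB.costB]
    omega
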